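/- The optimal occupation numbers attain the bathtub value: for b > 0 and g ≥ 0, define m* : ℕ → ℝ by m*(n) = 1 for 0 ≤ n ≤ ⌊2πg/b⌋ − 1, m*(⌊2πg/b⌋) = {2πg/b}, and m*(n) = 0 otherwise. Then 0 ≤ m*(n) ≤ 1 for all n, ∑_{n=0}^∞ m*(n) = 2πg/b, and ∑_{n=0}^∞ b(2n+1) m*(n) = b·( (2πg/b)² + {2πg/b}(1 − {2πg/b}) ) = (4π/b) F(b,g). -/

import Mathlib

open Real

/-- The magnetic penalization function
`F(b,g) = πg² + (b²/(4π))·{2πg/b}·(1 − {2πg/b})`. -/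
noncomputable def Fpen (b g : ℝ) : ℝ :=
  π * g ^ 2 + b ^ 2 / (4 * π) * Int.fract (2 * π * g / b) * (1 - Int.fract (2 * π * g / b))

lemma sum_odd_sq (N : ℕ) : ∑ n ∈ Finset.range N, (2 * (n : ℝ) + 1) = (N : ℝ) ^ 2 := by
  induction N with
  | zero => simp
  | succ k ih => rw [Finset.sum_range_succ, ih]; push_cast; ring

/-- The optimal occupation numbers `m*` (equal to `1` below the level `⌊2πg/b⌋`, to
`{2πg/b}` at that level, and `0` above) satisfy the constraints `0 ≤ m* ≤ 1`,
`∑ₙ m*(n) = 2πg/b`, and attain the bathtub value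
`∑ₙ b(2n+1) m*(n) = b((2πg/b)² + {2πg/b}(1−{2πg/b})) = (4π/b) F(b,g)`. -/
theorem bathtub_optimizer (b g : ℝ) (hb : 0 < b) (hg : 0 ≤ g) :
    let x := 2 * π * g / b
    let m : ℕ → ℝ := fun n =>
      if (n : ℤ) < ⌊x⌋ then 1 else if (n : ℤ) = ⌊x⌋ then Int.fract x else 0
    (∀ n, 0 ≤ m n ∧ m n ≤ 1) ∧
    (∑' n, m n) = x ∧
    (∑' n, b * (2 * n + 1) * m n) = b * (x ^ 2 + Int.fract x * (1 - Int.fract x)) ∧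
    b * (x ^ 2 + Int.fract x * (1 - Int.fract x)) = (4 * π / b) * Fpen b g := by
  intro x m
  have hx : 0 ≤ x := div_nonneg (by positivity) hb.le
  set N : ℕ := ⌊x⌋.toNat with hNdef
  have hN : (N : ℤ) = ⌊x⌋ := Int.toNat_of_nonneg (Int.floor_nonneg.mpr hx)
  have hNr : (N : ℝ) = (⌊x⌋ : ℝ) := by exact_mod_cast hN
  have hf0 : 0 ≤ Int.fract x := Int.fract_nonneg x
  have hf1 : Int.fract x ≤ 1 := (Int.fract_lt_one x).le
  have h1 : ∀ n : ℕ, ((n : ℤ) < ⌊x⌋) ↔ n < N := by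
    intro n; rw [← hN]; exact_mod_cast Iff.rfl
  have h2 : ∀ n : ℕ, ((n : ℤ) = ⌊x⌋) ↔ n = N := by
    intro n; rw [← hN]; exact_mod_cast Iff.rfl
  have hm : ∀ n, m n = if n < N then 1 else if n = N then Int.fract x else 0 := by
    intro n; simp only [m, h1, h2]
  have hsupp : ∀ n ∉ Finset.range (N + 1), m n = 0 := by
    intro n hn
    simp only [Finset.mem_range, not_lt] at hn
    rw [hm, if_neg (by omega), if_neg (by omega)]
  have hsupp' : ∀ n ∉ Finset.range (N + 1), b * (2 * n + 1) * m n = 0 := by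
    intro n hn; rw [hsupp n hn, mul_zero]
  have hfx : x = (N : ℝ) + Int.fract x := by
    rw [hNr, Int.fract]; ring
  refine ⟨?_, ?_, ?_, ?_⟩
  · intro n
    rw [hm]
    split_ifs <;> simp [hf0, hf1]
  · rw [tsum_eq_sum hsupp, Finset.sum_range_succ]
    have hcongr : ∀ n ∈ Finset.range N, m n = 1 := by
      intro n hn; rw [hm, if_pos (Finset.mem_range.mp hn)]
    rw [Finset.sum_congr rfl hcongr, hm, if_neg (lt_irrefl N), if_pos rfl]
    simp only [Finset.sum_const, Finset.card_range, nsmul_eq_mul, mul_one]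
    linarith [hfx]
  · rw [tsum_eq_sum hsupp', Finset.sum_range_succ]
    have hcongr : ∀ n ∈ Finset.range N, b * (2 * n + 1) * m n = b * (2 * (n : ℝ) + 1) := by
      intro n hn; rw [hm, if_pos (Finset.mem_range.mp hn), mul_one]
    rw [Finset.sum_congr rfl hcongr, hm, if_neg (lt_irrefl N), if_pos rfl]
    have hs : ∑ n ∈ Finset.range N, b * (2 * (n : ℝ) + 1) = b * (N : ℝ) ^ 2 := by
      rw [← Finset.mul_sum, sum_odd_sq]
    rw [hs]
    set f := Int.fract x with hfdef
    rw [hfx]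
    ring
  · have hb' : b ≠ 0 := hb.ne'
    have hπ : π ≠ 0 := pi_ne_zero
    have hx2 : x ^ 2 = 4 * π ^ 2 * g ^ 2 / b ^ 2 := by
      show (2 * π * g / b) ^ 2 = _
      field_simp; ring
    rw [Fpen, hx2]
    field_simp
    simp only [x]
    ring_nf
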